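/- Define G(x) = 2e^{x−1} − 2x for x ∈ ℝ, and let φ : ℝ → ℝ be the unique differentiable function with φ(t) < 1 for all t, φ(0) = 0, and φ′(t) = −√(G(φ(t))) for all t ∈ ℝ. Then lim_{t→−∞} φ′(t)/(φ(t)−1) = 1. -/

import Mathlib

open Real Filter Set Topology

-- key analytic lemma: (exp h - 1 - h)/h^2 → 1/2 as h → 0 (punctured)
lemma exp_quad_limit :
    Tendsto (fun h : ℝ => (Real.exp h - 1 - h) / h ^ 2) (𝓝[≠] (0:ℝ)) (𝓝 (1/2)) := by
  have key : Tendsto (fun h : ℝ => (Real.exp h - 1 - h) / h ^ 2 - 1/2) (𝓝[≠] (0:ℝ)) (𝓝 0) := by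
    apply squeeze_zero_norm' (a := fun h : ℝ => (2/9) * |h|)
    · filter_upwards [inter_mem_nhdsWithin {(0:ℝ)}ᶜ (Metric.ball_mem_nhds (0:ℝ) one_pos)]
        with h hh
      obtain ⟨hne, hball⟩ := hh
      have hne : h ≠ 0 := hne
      have hh1 : |h| ≤ 1 := le_of_lt (by simpa [Real.dist_eq] using hball)
      have hb := Real.exp_bound hh1 (n := 3) (by norm_num)
      have hsum : ∑ m ∈ Finset.range 3, h ^ m / (m.factorial : ℝ) = 1 + h + h^2/2 := by
        norm_num [Finset.sum_range_succ]
      have e1 : Real.exp h - (1 + h + h^2/2) = Real.exp h - 1 - h - h^2/2 := by ring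
      rw [hsum, e1] at hb
      norm_num [Nat.factorial] at hb
      have hb' : |Real.exp h - 1 - h - h^2/2| ≤ |h| ^ 3 * (2/9) := hb
      have h2 : (0:ℝ) < h ^ 2 := by positivity
      have h2' : (h:ℝ) ^ 2 ≠ 0 := ne_of_gt h2
      have : (Real.exp h - 1 - h) / h ^ 2 - 1/2 = (Real.exp h - 1 - h - h^2/2) / h^2 := by
        rw [eq_div_iff h2', sub_mul, div_mul_cancel₀ _ h2']
        ring
      rw [this, norm_div, Real.norm_eq_abs, Real.norm_eq_abs, abs_of_pos h2,
        div_le_iff₀ h2]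
      calc |Real.exp h - 1 - h - h^2/2| ≤ |h| ^ 3 * (2/9) := hb'
        _ = 2/9 * |h| * h^2 := by rw [pow_succ, sq_abs]; ring
    · have : Tendsto (fun h : ℝ => (2/9) * |h|) (𝓝 (0:ℝ)) (𝓝 (2/9 * |0|)) := by
        exact (continuous_const.mul continuous_abs).tendsto 0
      simpa using this.mono_left nhdsWithin_le_nhds
  have := key.add (tendsto_const_nhds (x := (1/2 : ℝ)))
  simpa using this

theorem stmt_18 (G : ℝ → ℝ) (hG : ∀ x, G x = 2 * Real.exp (x - 1) - 2 * x)
    (φ : ℝ → ℝ) (hφ1 : ∀ t, φ t < 1) (hφ0 : φ 0 = 0)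
    (hφd : ∀ t, HasDerivAt φ (-Real.sqrt (G (φ t))) t) :
    Filter.Tendsto (fun t => deriv φ t / (φ t - 1)) Filter.atBot (𝓝 1) := by
  -- G is positive for x ≠ 1
  have hG0 : ∀ x : ℝ, x ≠ 1 → 0 < G x := by
    intro x hx
    have h := Real.add_one_lt_exp (x := x - 1) (by intro h; apply hx; linarith)
    rw [hG]; linarith
  have hGc : Continuous G := by
    have : G = fun x => 2 * Real.exp (x - 1) - 2 * x := funext hG
    rw [this]; fun_prop
  have hderiv : ∀ t, deriv φ t = -Real.sqrt (G (φ t)) := fun t => (hφd t).deriv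
  have hdiff : Differentiable ℝ φ := fun t => (hφd t).differentiableAt
  have hanti : StrictAnti φ := by
    apply strictAnti_of_deriv_neg
    intro t
    rw [hderiv t]
    have := hG0 (φ t) (ne_of_lt (hφ1 t))
    simpa using Real.sqrt_pos.2 this
  -- φ → 1 at -∞
  have hlim : Tendsto φ atBot (𝓝 1) := by
    rw [tendsto_order]
    constructor
    · intro a ha
      -- claim: ∃ t, a < φ t
      have hex : ∃ t, a < φ t := by
        by_contra hcon
        push_neg at hcon
        have ha0 : 0 ≤ a := by simpa [hφ0] using hcon 0
        -- min of G on [0, a]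
        obtain ⟨c, hcmem, hcmin⟩ := (isCompact_Icc (a := (0:ℝ)) (b := a)).exists_isMinOn
          (nonempty_Icc.2 ha0) (hGc.continuousOn (s := Icc 0 a))
        have hc1 : c < 1 := lt_of_le_of_lt hcmem.2 ha
        have hGcpos : 0 < G c := hG0 c (ne_of_lt hc1)
        set m := Real.sqrt (G c) with hm
        have hmpos : 0 < m := Real.sqrt_pos.2 hGcpos
        -- ψ = φ + m * id is antitone on Iic 0
        have hψ : AntitoneOn (fun t => φ t + m * t) (Iic (0:ℝ)) := by
          apply antitoneOn_of_deriv_nonpos (convex_Iic 0)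
          · exact (hdiff.continuous.add (continuous_const.mul continuous_id)).continuousOn
          · exact ((hdiff.add ((differentiable_const m).mul differentiable_id)).differentiableOn)
          · intro t ht
            rw [interior_Iic] at ht
            have hd : deriv (fun t => φ t + m * t) t = -Real.sqrt (G (φ t)) + m := by
              have h1 : HasDerivAt (fun t => φ t + m * t) (-Real.sqrt (G (φ t)) + m * 1) t :=
                (hφd t).add ((hasDerivAt_id t).const_mul m)
              simpa using h1.deriv
            rw [hd]
            have hmem : φ t ∈ Icc 0 a := by
              constructor
              · rw [← hφ0]; exact (hanti.antitone (le_of_lt ht))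
              · exact hcon t
            have : m ≤ Real.sqrt (G (φ t)) := Real.sqrt_le_sqrt (hcmin hmem)
            linarith
        -- evaluate at t = -2/m
        have ht0 : (-2/m : ℝ) ≤ 0 := by
          rw [neg_div]
          exact neg_nonpos.2 (div_nonneg (by norm_num) hmpos.le)
        have := hψ (mem_Iic.2 ht0) (mem_Iic.2 le_rfl) ht0
        simp only [hφ0, mul_zero, add_zero] at this
        have hval : m * (-2/m) = -2 := by field_simp
        rw [hval] at this
        have := hφ1 (-2/m)
        linarith
      obtain ⟨t₀, ht₀⟩ := hex
      filter_upwards [eventually_le_atBot t₀] with t ht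
      exact lt_of_lt_of_le ht₀ (hanti.antitone ht)
    · intro a ha
      filter_upwards with t
      exact lt_trans (hφ1 t) ha
  -- limit of √(G x)/(1-x) as x → 1⁻
  have hF : Tendsto (fun x => Real.sqrt (G x) / (1 - x)) (𝓝[<] (1:ℝ)) (𝓝 1) := by
    -- G x / (x-1)^2 → 1
    have h1 : Tendsto (fun x : ℝ => G x / (x - 1) ^ 2) (𝓝[<] (1:ℝ)) (𝓝 1) := by
      have hsub : Tendsto (fun x : ℝ => x - 1) (𝓝[<] (1:ℝ)) (𝓝[≠] (0:ℝ)) := by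
        apply tendsto_nhdsWithin_of_tendsto_nhds_of_eventually_within
        · have : Tendsto (fun x : ℝ => x - 1) (𝓝 (1:ℝ)) (𝓝 (1 - 1 : ℝ)) :=
            (continuous_id.sub continuous_const).tendsto 1
          simpa using this.mono_left nhdsWithin_le_nhds
        · filter_upwards [self_mem_nhdsWithin] with x hx
          simp only [mem_compl_iff, mem_singleton_iff]
          intro h; exact absurd (by linarith : x = 1) (ne_of_lt hx)
      have hcomp := exp_quad_limit.comp hsub
      have heq : ∀ᶠ x in 𝓝[<] (1:ℝ),
          2 * ((Real.exp (x-1) - 1 - (x-1)) / (x-1) ^ 2) = G x / (x - 1) ^ 2 := by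
        filter_upwards [self_mem_nhdsWithin] with x hx
        have hne : (x - 1) ≠ 0 := by intro h; exact absurd (by linarith : x = 1) (ne_of_lt hx)
        rw [hG]
        field_simp
        ring
      have h2 := (hcomp.const_mul 2)
      rw [show (2:ℝ) * (1/2) = 1 by norm_num] at h2
      exact Tendsto.congr' heq h2
    -- √(G x)/(1-x) = √(G x/(x-1)^2)
    have heq : ∀ᶠ x in 𝓝[<] (1:ℝ),
        Real.sqrt (G x / (x - 1) ^ 2) = Real.sqrt (G x) / (1 - x) := by
      filter_upwards [self_mem_nhdsWithin] with x hx
      have hxlt : x < 1 := mem_Iio.mp hx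
      have h1x : (0:ℝ) < 1 - x := sub_pos.2 hxlt
      have hGnn : 0 ≤ G x := le_of_lt (hG0 x (ne_of_lt hxlt))
      rw [Real.sqrt_div hGnn, Real.sqrt_sq_eq_abs, abs_of_neg (by linarith : x - 1 < 0),
        neg_sub]
    have hsq : Tendsto (fun x => Real.sqrt (G x / (x - 1) ^ 2)) (𝓝[<] (1:ℝ)) (𝓝 1) := by
      have := (Real.continuous_sqrt.tendsto 1).comp h1
      simpa [Function.comp_def] using this
    exact Tendsto.congr' heq hsq
  -- compose
  have hφlt : Tendsto φ atBot (𝓝[<] (1:ℝ)) :=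
    tendsto_nhdsWithin_of_tendsto_nhds_of_eventually_within _ hlim
      (Eventually.of_forall fun t => hφ1 t)
  have := hF.comp hφlt
  apply this.congr
  intro t
  simp only [Function.comp_apply]
  rw [hderiv t, neg_div, ← div_neg, neg_sub]
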